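/- The matrix A_x of the Kirchhoff–Love first-order system is diagonalizable over the reals: ℝ¹⁰ has a basis of eigenvectors of A_x. -/

import Mathlib

set_option maxHeartbeats 4000000

theorem stmt2 (ρ I E D ν : ℝ) (hρ : 0 < ρ) (hI : 0 < I) (hE : 0 < E) (hD : 0 < D)
    (hν : -1 < ν ∧ ν < 1)
    (Ax : Matrix (Fin 10) (Fin 10) ℝ)
    (hAx : Ax = !![0, 0, 0, 0, -1/ρ, 0, 0, 0, 0, 0;
    0, 0, 0, 0, 0, 0, -1/ρ, 0, 0, 0;
    0, 0, 0, 0, 0, 0, 0, -1/I, 0, 0;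
    0, 0, 0, 0, 0, 0, 0, 0, 0, -1/I;
    -E/(1-ν^2), 0, 0, 0, 0, 0, 0, 0, 0, 0;
    -E*ν/(1-ν^2), 0, 0, 0, 0, 0, 0, 0, 0, 0;
    0, -E/(4*(1+ν)), 0, 0, 0, 0, 0, 0, 0, 0;
    0, 0, -D, 0, 0, 0, 0, 0, 0, 0;
    0, 0, -D*ν, 0, 0, 0, 0, 0, 0, 0;
    0, 0, 0, -D*(1-ν)/2, 0, 0, 0, 0, 0, 0]) :
    ∃ b : Module.Basis (Fin 10) ℝ (Fin 10 → ℝ),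
      ∀ i, ∃ μ : ℝ, Ax.mulVec (b i) = μ • (b i) := by
  obtain ⟨hν1, hν2⟩ := hν
  have h1p : (0:ℝ) < 1 + ν := by linarith
  have h1m : (0:ℝ) < 1 - ν := by linarith
  have h1sq : (0:ℝ) < 1 - ν^2 := by nlinarith
  obtain ⟨s1, hs1p, hs1⟩ : ∃ s : ℝ, 0 < s ∧ E = ρ * s^2 * (1 - ν^2) := by
    refine ⟨Real.sqrt (E / (ρ * (1 - ν^2))), Real.sqrt_pos.2 (by positivity), ?_⟩
    rw [Real.sq_sqrt (by positivity)]; field_simp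
  obtain ⟨s3, hs3p, hs3⟩ : ∃ s : ℝ, 0 < s ∧ D = I * s^2 := by
    refine ⟨Real.sqrt (D / I), Real.sqrt_pos.2 (by positivity), ?_⟩
    rw [Real.sq_sqrt (by positivity)]; field_simp
  subst hs1 hs3
  obtain ⟨s2, hs2p, hs2⟩ : ∃ s : ℝ, 0 < s ∧ s1^2 * (1-ν) = 4 * s^2 := by
    refine ⟨s1 * Real.sqrt (1-ν) / 2, by positivity, ?_⟩
    rw [div_pow, mul_pow, Real.sq_sqrt h1m.le]; ring
  obtain ⟨s4, hs4p, hs4⟩ : ∃ s : ℝ, 0 < s ∧ s3^2 * (1-ν) = 2 * s^2 := by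
    refine ⟨s3 * Real.sqrt ((1-ν)/2), by positivity, ?_⟩
    rw [mul_pow, Real.sq_sqrt (by positivity)]; ring
  set P : Matrix (Fin 10) (Fin 10) ℝ :=
    !![1,1,0,0,0,0,0,0,0,0;
       0,0,0,1,1,0,0,0,0,0;
       0,0,0,0,0,1,1,0,0,0;
       0,0,0,0,0,0,0,0,1,1;
       -(ρ*s1), ρ*s1, 0,0,0,0,0,0,0,0;
       -(ν*ρ*s1), ν*ρ*s1, 1,0,0,0,0,0,0,0;
       0,0,0,-(ρ*s2), ρ*s2, 0,0,0,0,0;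
       0,0,0,0,0,-(I*s3), I*s3, 0,0,0;
       0,0,0,0,0,-(I*ν*s3), I*ν*s3, 1,0,0;
       0,0,0,0,0,0,0,0,-(I*s4), I*s4] with hP
  set Q : Matrix (Fin 10) (Fin 10) ℝ :=
    !![1/2,0,0,0,-(1/(2*ρ*s1)),0,0,0,0,0;
       1/2,0,0,0,  1/(2*ρ*s1), 0,0,0,0,0;
       0,0,0,0,-ν,1,0,0,0,0;
       0,1/2,0,0,0,0,-(1/(2*ρ*s2)),0,0,0;
       0,1/2,0,0,0,0,  1/(2*ρ*s2), 0,0,0;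
       0,0,1/2,0,0,0,0,-(1/(2*I*s3)),0,0;
       0,0,1/2,0,0,0,0,  1/(2*I*s3), 0,0;
       0,0,0,0,0,0,0,-ν,1,0;
       0,0,0,1/2,0,0,0,0,0,-(1/(2*I*s4));
       0,0,0,1/2,0,0,0,0,0,  1/(2*I*s4)] with hQ
  set μv : Fin 10 → ℝ := ![s1,-s1,0,s2,-s2,s3,-s3,0,s4,-s4] with hμ
  have hne1 : (1-ν^2) ≠ 0 := h1sq.ne'
  have hne2 : (1+ν) ≠ 0 := h1p.ne'
  have hne3 : (1-ν) ≠ 0 := h1m.ne'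
  have hρ0 : ρ ≠ 0 := hρ.ne'
  have hI0 : I ≠ 0 := hI.ne'
  have h10 : s1 ≠ 0 := hs1p.ne'
  have h20 : s2 ≠ 0 := hs2p.ne'
  have h30 : s3 ≠ 0 := hs3p.ne'
  have h40 : s4 ≠ 0 := hs4p.ne'
  have hQP : Q * P = 1 := by
    rw [hQ, hP]
    rw [← Matrix.ext_iff]
    simp only [Fin.forall_fin_succ, Matrix.mul_apply, Fin.sum_univ_succ, Finset.univ_eq_empty,
      Finset.sum_empty, Matrix.cons_val_zero, Matrix.cons_val_succ, Matrix.one_apply,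
      Matrix.diagonal_apply, Fin.succ_zero_eq_one, Matrix.cons_val', Matrix.cons_val_fin_one,
      Matrix.empty_val', Matrix.of_apply, IsEmpty.forall_iff, and_true]
    norm_num
    repeat' apply And.intro
    all_goals try field_simp
    all_goals try ring
    all_goals try norm_num [Fin.ext_iff, Fin.val_succ]
    all_goals first
      | linear_combination (ρ*(1+ν))*hs2
      | linear_combination (-(ρ*(1+ν)))*hs2
      | linear_combination (ρ*(1+ν)/4)*hs2
      | linear_combination (-(ρ*(1+ν))/4)*hs2
      | linear_combination (I/2)*hs4
      | linear_combination (-(I/2))*hs4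
      | linear_combination I*hs4
      | linear_combination (-I)*hs4

  have hAP : Ax * P = P * Matrix.diagonal μv := by
    rw [hAx, hP, hμ]
    rw [← Matrix.ext_iff]
    simp only [Fin.forall_fin_succ, Matrix.mul_apply, Fin.sum_univ_succ, Finset.univ_eq_empty,
      Finset.sum_empty, Matrix.cons_val_zero, Matrix.cons_val_succ, Matrix.one_apply,
      Matrix.diagonal_apply, Fin.succ_zero_eq_one, Matrix.cons_val', Matrix.cons_val_fin_one,
      Matrix.empty_val', Matrix.of_apply, IsEmpty.forall_iff, and_true]
    norm_num
    repeat' apply And.intro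
    all_goals try field_simp
    all_goals try ring
    all_goals try norm_num [Fin.ext_iff, Fin.val_succ]
    all_goals first
      | linear_combination (ρ*(1+ν))*hs2
      | linear_combination (-(ρ*(1+ν)))*hs2
      | linear_combination (ρ*(1+ν)/4)*hs2
      | linear_combination (-(ρ*(1+ν))/4)*hs2
      | linear_combination (I/2)*hs4
      | linear_combination (-(I/2))*hs4
      | linear_combination I*hs4
      | linear_combination (-I)*hs4

  have inst : Invertible P := invertibleOfLeftInverse P Q hQP
  refine ⟨(Pi.basisFun ℝ (Fin 10)).map (P.toLinearEquiv' inst), fun i => ⟨μv i, ?_⟩⟩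
  have hb : ((Pi.basisFun ℝ (Fin 10)).map (P.toLinearEquiv' inst)) i = P.mulVec (Pi.single i 1) := by
    simp [Module.Basis.map_apply, Matrix.toLinearEquiv', Matrix.toLin'_apply, Pi.basisFun_apply]
  rw [hb, Matrix.mulVec_mulVec, hAP, ← Matrix.mulVec_mulVec, Matrix.diagonal_mulVec_single,
    mul_one, show (Pi.single i (μv i) : Fin 10 → ℝ) = μv i • (Pi.single i 1 : Fin 10 → ℝ) by funext k; by_cases h : k = i <;> simp [Pi.single_apply, h],
    Matrix.mulVec_smul]
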